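/- Let (X,d) be a complete metric space. For each k ∈ ℕ let 𝓕_k = {f_{1,k}, …, f_{n_k,k}} be a finite family of contractions on X, with d(f_{i,k}(x), f_{i,k}(y)) ≤ s_{i,k}·d(x,y) where s_{i,k} < 1, and let L_k := max_{1≤i≤n_k} s_{i,k}. Suppose (i) there exists a nonempty, closed and bounded set 𝓘 ⊆ X with f_{i,k}(𝓘) ⊆ 𝓘 for all i ∈ {1,…,n_k} and all k ∈ ℕ, and (ii) ∑_{k=1}^∞ ∏_{j=1}^k L_j < ∞. Then there exists a nonempty compact set A ⊆ 𝓘 such that for every nonempty compact set A_0 ⊆ 𝓘, the backward trajectories Ψ_k(A_0) := 𝓕_1 ∘ 𝓕_2 ∘ ⋯ ∘ 𝓕_k (A_0) converge to A in the Hausdorff distance as k → ∞; in particular the limit A is independent of A_0. -/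

import Mathlib

open Filter Topology
open scoped ENNReal NNReal

/-- Backward trajectory of a sequence of self-maps:
`backwardTraj T k = T 0 ∘ T 1 ∘ ⋯ ∘ T (k-1)`. -/
def backwardTraj {α : Type*} (T : ℕ → α → α) : ℕ → α → α
  | 0 => id
  | k + 1 => fun a => backwardTraj T k (T k a)

open EMetric Set in
lemma aux_infEdist_image {X : Type*} [MetricSpace X] {K : NNReal} {f : X → X}
    (hf : LipschitzWith K f) {t : Set X} (ht : t.Nonempty) (x : X) :
    infEdist (f x) (f '' t) ≤ K * infEdist x t := by
  have hne : Nonempty t := ht.to_subtype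
  have h2 : (K : ℝ≥0∞) * infEdist x t = ⨅ y : t, (K : ℝ≥0∞) * edist x y := by
    rw [infEdist, Metric.infEDist, ← iInf_subtype'']
    exact ENNReal.mul_iInf (by simp)
  rw [h2]
  exact le_iInf fun y =>
    (infEdist_le_edist_of_mem (mem_image_of_mem f y.2)).trans (hf.edist_le_mul x y)

open EMetric Set in
lemma aux_hutch_lipschitz {X : Type*} [MetricSpace X] {ι : Type*} [Nonempty ι]
    {g : ι → X → X} {K : ι → NNReal} {L : NNReal}
    (hg : ∀ i, LipschitzWith (K i) (g i)) (hK : ∀ i, K i ≤ L)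
    {S T : Set X} (hS : S.Nonempty) (hT : T.Nonempty) :
    hausdorffEdist (⋃ i, g i '' S) (⋃ i, g i '' T) ≤ L * hausdorffEdist S T := by
  have key : ∀ (S T : Set X), S.Nonempty → T.Nonempty → ∀ x ∈ ⋃ i, g i '' S,
      infEdist x (⋃ i, g i '' T) ≤ L * hausdorffEdist S T := by
    intro S T hS hT x hx
    obtain ⟨i, y, hy, rfl⟩ := by simpa using hx
    calc infEdist (g i y) (⋃ j, g j '' T) ≤ infEdist (g i y) (g i '' T) :=
          infEdist_anti (subset_iUnion (fun j => g j '' T) i)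
      _ ≤ K i * infEdist y T := aux_infEdist_image (hg i) hT y
      _ ≤ L * hausdorffEdist S T :=
          mul_le_mul' (ENNReal.coe_le_coe.2 (hK i)) (infEdist_le_hausdorffEdist_of_mem hy)
  refine hausdorffEdist_le_of_infEdist (key S T hS hT) fun x hx => ?_
  rw [hausdorffEdist, Metric.hausdorffEDist_comm]
  exact key T S hT hS x hx

set_option maxHeartbeats 1000000 in
theorem backward_hutchinson_tendsto {X : Type*} [MetricSpace X] [CompleteSpace X]
    (n : ℕ → ℕ) (hn : ∀ k, 0 < n k)
    (f : (k : ℕ) → Fin (n k) → X → X) (s : (k : ℕ) → Fin (n k) → NNReal)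
    (hf : ∀ k i, LipschitzWith (s k i) (f k i)) (hs : ∀ k i, s k i < 1)
    (I : Set X) (hne : I.Nonempty) (hcl : IsClosed I) (hbd : Bornology.IsBounded I)
    (hinv : ∀ k i, Set.MapsTo (f k i) I I)
    (hsum : Summable fun k => ∏ j ∈ Finset.range (k + 1),
      ((Finset.univ.sup (s j) : NNReal) : ℝ)) :
    ∃ A : Set X, A ⊆ I ∧ A.Nonempty ∧ IsCompact A ∧
      ∀ A₀ : Set X, A₀ ⊆ I → A₀.Nonempty → IsCompact A₀ →
        Tendsto (fun k => Metric.hausdorffDist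
          (backwardTraj (fun k S => ⋃ i, f k i '' S) k A₀) A) atTop (𝓝 0) := by
  classical
  have hιne : ∀ k, Nonempty (Fin (n k)) := fun k => ⟨⟨0, hn k⟩⟩
  set L : ℕ → NNReal := fun k => Finset.univ.sup (s k) with hL
  set G : ℕ → Set X → Set X := fun k S => ⋃ i, f k i '' S with hG
  set Ψ : ℕ → Set X → Set X := backwardTraj G with hΨ
  -- basic preservation properties of G
  have hGne : ∀ k {S : Set X}, S.Nonempty → (G k S).Nonempty := by
    intro k S hS
    have := hιne k
    obtain ⟨x, hx⟩ := hS
    exact ⟨f k (Classical.arbitrary _) x, Set.mem_iUnion.2 ⟨_, Set.mem_image_of_mem _ hx⟩⟩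
  have hGsub : ∀ k {S : Set X}, S ⊆ I → G k S ⊆ I := by
    intro k S hSI
    exact Set.iUnion_subset fun i => (Set.image_mono hSI).trans ((hinv k i).image_subset)
  have hGcp : ∀ k {S : Set X}, IsCompact S → IsCompact (G k S) := by
    intro k S hS
    have := hιne k
    exact isCompact_iUnion fun i => hS.image (hf k i).continuous
  -- preservation for Ψ
  have hΨne : ∀ k {S : Set X}, S.Nonempty → (Ψ k S).Nonempty := by
    intro k
    induction k with
    | zero => exact fun h => h
    | succ k ih => exact fun h => ih (hGne k h)
  have hΨsub : ∀ k {S : Set X}, S ⊆ I → Ψ k S ⊆ I := by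
    intro k
    induction k with
    | zero => exact fun h => h
    | succ k ih => exact fun h => ih (hGsub k h)
  have hΨcp : ∀ k {S : Set X}, IsCompact S → IsCompact (Ψ k S) := by
    intro k
    induction k with
    | zero => exact fun h => h
    | succ k ih => exact fun h => ih (hGcp k h)
  -- contraction estimates
  set P : ℕ → ℝ≥0∞ := fun k => ∏ j ∈ Finset.range k, (L j : ℝ≥0∞) with hP
  have hGlip : ∀ k {S T : Set X}, S.Nonempty → T.Nonempty →
      EMetric.hausdorffEdist (G k S) (G k T) ≤ L k * EMetric.hausdorffEdist S T := by
    intro k S T hS hT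
    have := hιne k
    exact aux_hutch_lipschitz (hf k) (fun i => Finset.le_sup (Finset.mem_univ i)) hS hT
  have hΨlip : ∀ k {S T : Set X}, S.Nonempty → T.Nonempty →
      EMetric.hausdorffEdist (Ψ k S) (Ψ k T) ≤ P k * EMetric.hausdorffEdist S T := by
    intro k
    induction k with
    | zero => intro S T _ _; simp [hP, hΨ, backwardTraj]
    | succ k ih =>
      intro S T hS hT
      calc EMetric.hausdorffEdist (Ψ k (G k S)) (Ψ k (G k T))
          ≤ P k * EMetric.hausdorffEdist (G k S) (G k T) := ih (hGne k hS) (hGne k hT)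
        _ ≤ P k * (L k * EMetric.hausdorffEdist S T) :=
            mul_le_mul_right (hGlip k hS hT) _
        _ = P (k + 1) * EMetric.hausdorffEdist S T := by
            have : P (k + 1) = P k * (L k : ℝ≥0∞) := Finset.prod_range_succ _ _
            rw [this, mul_assoc]
  -- diameter bound
  set D : ℝ≥0∞ := EMetric.diam I with hD
  have hDne : D ≠ ⊤ := hbd.ediam_ne_top
  have hDbd : ∀ {S T : Set X}, S ⊆ I → T ⊆ I → S.Nonempty → T.Nonempty →
      EMetric.hausdorffEdist S T ≤ D := by
    intro S T hSI hTI hS hT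
    exact (EMetric.hausdorffEdist_le_ediam hS hT).trans
      (EMetric.diam_mono (Set.union_subset hSI hTI))
  -- summability conversion
  set Q : ℕ → NNReal := fun k => ∏ j ∈ Finset.range k, L j with hQ
  have hPQ : ∀ k, P k = (Q k : ℝ≥0∞) := fun k => (ENNReal.coe_finset_prod _ _).symm
  have hQsumR : Summable (fun k => ((Q k : ℝ))) := by
    have h1 : Summable fun k => ((Q (k + 1) : ℝ)) := by
      simp only [hQ, NNReal.coe_prod]
      exact hsum
    exact (summable_nat_add_iff (f := fun k => ((Q k : ℝ))) 1).mp h1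
  have hQsum : Summable Q := NNReal.summable_coe.mp hQsumR
  have hQtend : Tendsto (fun k => (Q k : ℝ)) atTop (𝓝 0) := hQsumR.tendsto_atTop_zero
  -- the base sequence in NonemptyCompacts
  obtain ⟨x₀, hx₀⟩ := hne
  have hx₀I : ({x₀} : Set X) ⊆ I := Set.singleton_subset_iff.2 hx₀
  set a : ℕ → TopologicalSpace.NonemptyCompacts X := fun k =>
    ⟨⟨Ψ k {x₀}, hΨcp k isCompact_singleton⟩, hΨne k (Set.singleton_nonempty x₀)⟩ with ha
  have ha_coe : ∀ k, (a k : Set X) = Ψ k {x₀} := fun k => rfl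
  have ha_sub : ∀ k, (a k : Set X) ⊆ I := fun k => hΨsub k hx₀I
  have hstep : ∀ k, edist (a k) (a (k + 1)) ≤ P k * D := by
    intro k
    have h1 : edist (a k) (a (k + 1)) =
        EMetric.hausdorffEdist (Ψ k {x₀}) (Ψ k (G k {x₀})) := rfl
    rw [h1]
    calc EMetric.hausdorffEdist (Ψ k {x₀}) (Ψ k (G k {x₀}))
        ≤ P k * EMetric.hausdorffEdist ({x₀} : Set X) (G k {x₀}) :=
          hΨlip k (Set.singleton_nonempty x₀) (hGne k (Set.singleton_nonempty x₀))
      _ ≤ P k * D := mul_le_mul_right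
          (hDbd hx₀I (hGsub k hx₀I) (Set.singleton_nonempty x₀)
            (hGne k (Set.singleton_nonempty x₀))) _
  have htsum : (∑' k, P k * D) ≠ ⊤ := by
    rw [ENNReal.tsum_mul_right]
    refine ENNReal.mul_ne_top ?_ hDne
    simp only [hPQ]
    exact ENNReal.tsum_coe_ne_top_iff_summable.2 hQsum
  have hcauchy : CauchySeq a := cauchySeq_of_edist_le_of_tsum_ne_top _ hstep htsum
  obtain ⟨𝔸, h𝔸⟩ := cauchySeq_tendsto_of_complete hcauchy
  have hdist0 : Tendsto (fun k => dist (a k) 𝔸) atTop (𝓝 0) :=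
    tendsto_iff_dist_tendsto_zero.mp h𝔸
  have hedist0 : Tendsto (fun k => edist (a k) 𝔸) atTop (𝓝 0) := by
    simp only [edist_dist]
    have := ENNReal.tendsto_ofReal hdist0
    simpa using this
  refine ⟨(𝔸 : Set X), ?_, 𝔸.nonempty, 𝔸.isCompact, ?_⟩
  · -- A ⊆ I
    intro x hx
    have hxI : EMetric.infEdist x I = 0 := by
      have hle : ∀ k, EMetric.infEdist x I ≤ edist (a k) 𝔸 := by
        intro k
        calc EMetric.infEdist x I ≤ EMetric.infEdist x (a k : Set X) :=
              EMetric.infEdist_anti (ha_sub k)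
          _ ≤ EMetric.hausdorffEdist (𝔸 : Set X) (a k : Set X) :=
              EMetric.infEdist_le_hausdorffEdist_of_mem hx
          _ = edist (a k) 𝔸 := by
              rw [edist_comm]; rfl
      exact le_antisymm (ge_of_tendsto' hedist0 hle) zero_le
    have := EMetric.mem_closure_iff_infEdist_zero.2 hxI
    rwa [hcl.closure_eq] at this
  · -- convergence for every A₀
    intro A₀ hA₀I hA₀ne hA₀cp
    have hfin : ∀ k, EMetric.hausdorffEdist (Ψ k A₀) (Ψ k {x₀}) ≤ P k * D := by
      intro k
      calc EMetric.hausdorffEdist (Ψ k A₀) (Ψ k {x₀})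
          ≤ P k * EMetric.hausdorffEdist A₀ ({x₀} : Set X) :=
            hΨlip k hA₀ne (Set.singleton_nonempty x₀)
        _ ≤ P k * D := mul_le_mul_right
            (hDbd hA₀I hx₀I hA₀ne (Set.singleton_nonempty x₀)) _
    have hPDne : ∀ k, P k * D ≠ ⊤ := fun k =>
      ENNReal.mul_ne_top (by simp [hPQ]) hDne
    -- real-valued bound
    have hbound : ∀ k, Metric.hausdorffDist (Ψ k A₀) (𝔸 : Set X) ≤
        (P k * D).toReal + dist (a k) 𝔸 := by
      intro k
      have h1 : Metric.hausdorffDist (Ψ k A₀) (Ψ k {x₀}) ≤ (P k * D).toReal := by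
        rw [Metric.hausdorffDist]
        exact ENNReal.toReal_mono (hPDne k) (hfin k)
      have h2 : Metric.hausdorffDist (Ψ k {x₀}) (𝔸 : Set X) = dist (a k) 𝔸 :=
        (Metric.NonemptyCompacts.dist_eq (x := a k) (y := 𝔸)).symm
      have htri : Metric.hausdorffDist (Ψ k A₀) (𝔸 : Set X) ≤
          Metric.hausdorffDist (Ψ k A₀) (Ψ k {x₀}) +
          Metric.hausdorffDist (Ψ k {x₀}) (𝔸 : Set X) :=
        Metric.hausdorffDist_triangle (((hfin k).trans_lt (lt_top_iff_ne_top.2 (hPDne k))).ne)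
      exact htri.trans (add_le_add h1 (le_of_eq h2))
    have hbnd0 : Tendsto (fun k => (P k * D).toReal + dist (a k) 𝔸) atTop (𝓝 0) := by
      have h1 : Tendsto (fun k => (P k * D).toReal) atTop (𝓝 0) := by
        have heq : ∀ k, (P k * D).toReal = (Q k : ℝ) * D.toReal := by
          intro k
          rw [hPQ, ENNReal.toReal_mul, ENNReal.coe_toReal]
        simp only [heq]
        simpa using hQtend.mul_const D.toReal
      simpa using h1.add hdist0
    refine squeeze_zero (fun k => Metric.hausdorffDist_nonneg) hbound hbnd0
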